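/- Let u = u_1⋯u_m be a word over the positive integers, with the sequences v_p of positions of u defined as in the context. Then u is a Yamanouchi word — that is, every initial segment of u contains, for every i ≥ 1, at least as many letters i as letters i+1 — if and only if every position p of u carrying the letter j belongs to exactly j of the sequences v_1,…,v_m. -/

import Mathlib

namespace OrthoBij

/-- A word over the positive integers is Yamanouchi if every initial segment contains,
for every `i ≥ 1`, at least as many letters `i` as letters `i+1`. -/
def IsYamanouchi (u : List ℕ) : Prop :=
  ∀ s : List ℕ, s <+: u → ∀ i : ℕ, 1 ≤ i → s.count (i + 1) ≤ s.count i

/-- Greedy extension of the sequence `v_p` of positions of the word `u`: given the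
previously defined sequences `prev` and the current last term `e` (term number `m - 1`),
term number `m` is obtained by taking, among the positions whose letter is strictly
larger than the letter of `e` and which belong to exactly `m - 1` of the sequences of
`prev`, those carrying the smallest letter, and among them the rightmost position. -/
def extendSeqP (u : List ℕ) (prev : List (List ℕ)) : ℕ → ℕ → ℕ → List ℕ
  | 0, _, _ => []
  | fuel + 1, m, e =>
    let C := (List.range u.length).filter (fun q =>
      decide (u.getD e 0 < u.getD q 0) &&
      (prev.countP (fun sq => decide (q ∈ sq)) + 1 == m))
    match (C.map (fun q => u.getD q 0)).min? with
    | none => []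
    | some lmin =>
      match (C.filter (fun q => u.getD q 0 == lmin)).max? with
      | none => []
      | some q => q :: extendSeqP u prev fuel (m + 1) q

/-- Build all sequences `v_p`, processing the positions of `order` in order and
accumulating the previously defined sequences. -/
def seqsAuxP (u : List ℕ) : List ℕ → List (List ℕ) → List (List ℕ)
  | [], acc => acc
  | p :: rest, acc =>
      seqsAuxP u rest (acc ++ [p :: extendSeqP u acc (u.length + 1) 2 p])

/-- All the sequences `v_p` of the word `u = u₁ ⋯ u_m`, for `p = m, m-1, …, 1`. -/
def seqsP (u : List ℕ) : List (List ℕ) :=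
  seqsAuxP u ((List.range u.length).reverse) []

end OrthoBij

namespace S15

/-- Balanced: for all i, #(i+2) ≤ #(i+1). -/
def Bal (t : List ℕ) : Prop := ∀ i : ℕ, t.count (i+2) ≤ t.count (i+1)

/-- Reverse lattice word: every suffix is balanced. -/
def RL (w : List ℕ) : Prop := ∀ t, t <:+ w → Bal t

inductive KStep : List ℕ → List ℕ → Prop
  | k1 (l r : List ℕ) (x y z : ℕ) (h1 : x ≤ y) (h2 : y < z) :
      KStep (l ++ x :: z :: y :: r) (l ++ z :: x :: y :: r)
  | k2 (l r : List ℕ) (x y z : ℕ) (h1 : x < y) (h2 : y ≤ z) :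
      KStep (l ++ y :: x :: z :: r) (l ++ y :: z :: x :: r)

def Keq : List ℕ → List ℕ → Prop := Relation.EqvGen KStep

theorem Keq.refl (w : List ℕ) : Keq w w := Relation.EqvGen.refl w
theorem Keq.symm {w w' : List ℕ} (h : Keq w w') : Keq w' w := Relation.EqvGen.symm _ _ h
theorem Keq.trans {a b c : List ℕ} (h : Keq a b) (h' : Keq b c) : Keq a c :=
  Relation.EqvGen.trans _ _ _ h h'
theorem Keq.of_step {a b : List ℕ} (h : KStep a b) : Keq a b := Relation.EqvGen.rel _ _ h

theorem KStep.perm {w w' : List ℕ} (h : KStep w w') : w.Perm w' := by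
  cases h with
  | k1 l r x y z h1 h2 =>
      exact (List.Perm.append_left l (by
        have : List.Perm [x, z, y] [z, x, y] := List.Perm.swap z x [y]
        simpa using this.append_right r))
  | k2 l r x y z h1 h2 =>
      refine List.Perm.append_left l ?_
      refine List.Perm.cons y ?_
      have : List.Perm [x, z] [z, x] := List.Perm.swap z x []
      simpa using this.append_right r

theorem Keq.perm {w w' : List ℕ} (h : Keq w w') : w.Perm w' := by
  induction h with
  | rel a b hab => exact hab.perm
  | refl a => exact List.Perm.refl a
  | symm a b _ ih => exact ih.symm
  | trans a b c _ _ ih1 ih2 => exact ih1.trans ih2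

theorem KStep.context {w w' : List ℕ} (h : KStep w w') (l r : List ℕ) :
    KStep (l ++ w ++ r) (l ++ w' ++ r) := by
  cases h with
  | k1 l' r' x y z h1 h2 =>
      have := KStep.k1 (l ++ l') (r' ++ r) x y z h1 h2
      simpa using this
  | k2 l' r' x y z h1 h2 =>
      have := KStep.k2 (l ++ l') (r' ++ r) x y z h1 h2
      simpa using this

theorem Keq.context {w w' : List ℕ} (h : Keq w w') (l r : List ℕ) :
    Keq (l ++ w ++ r) (l ++ w' ++ r) := by
  induction h with
  | rel a b hab => exact Keq.of_step (hab.context l r)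
  | refl a => exact Keq.refl _
  | symm a b _ ih => exact ih.symm
  | trans a b c _ _ ih1 ih2 => exact ih1.trans ih2

theorem Keq.append_left {w w' : List ℕ} (h : Keq w w') (l : List ℕ) :
    Keq (l ++ w) (l ++ w') := by simpa using h.context l []

theorem Keq.append_right {w w' : List ℕ} (h : Keq w w') (r : List ℕ) :
    Keq (w ++ r) (w' ++ r) := by simpa using h.context [] r

theorem Bal.perm {w w' : List ℕ} (h : w.Perm w') (hb : Bal w) : Bal w' := by
  intro i; rw [← h.count_eq, ← h.count_eq]; exact hb i

theorem RL_cons {a : ℕ} {w : List ℕ} : RL (a :: w) ↔ Bal (a :: w) ∧ RL w := by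
  constructor
  · intro h
    exact ⟨h _ (List.suffix_refl _), fun t ht => h t (ht.trans (List.suffix_cons a w))⟩
  · rintro ⟨h1, h2⟩ t ht
    rcases List.suffix_cons_iff.1 ht with rfl | ht
    · exact h1
    · exact h2 t ht

theorem RL_nil : RL [] := by
  intro t ht i
  simp [List.suffix_nil.1 ht]


theorem bal_k1_fwd {x y z : ℕ} {r : List ℕ} (h1 : x ≤ y) (h2 : y < z)
    (hw : Bal (x :: z :: y :: r)) (hs : Bal (y :: r)) : Bal (x :: y :: r) := by
  intro i
  have a1 := hw i
  have a2 := hs i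
  simp only [List.count_cons, beq_iff_eq] at a1 a2 ⊢
  split_ifs at a1 a2 ⊢ <;> omega

theorem bal_k1_bwd {x y z : ℕ} {r : List ℕ} (h1 : x ≤ y) (h2 : y < z)
    (hw : Bal (z :: x :: y :: r)) (hs : Bal (y :: r)) (hr : Bal r) : Bal (z :: y :: r) := by
  intro i
  have a1 := hw i
  have a2 := hs i
  have a3 := hr i
  simp only [List.count_cons, beq_iff_eq] at a1 a2 ⊢
  split_ifs at a1 a2 ⊢ <;> omega

theorem bal_k2_fwd {x y z : ℕ} {r : List ℕ} (h1 : x < y) (h2 : y ≤ z)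
    (hw : Bal (x :: z :: r)) (hr : Bal r) : Bal (x :: r) := by
  intro i
  have a1 := hw i
  have a3 := hr i
  simp only [List.count_cons, beq_iff_eq] at a1 ⊢
  split_ifs at a1 ⊢ <;> omega

theorem bal_k2_bwd {x y z : ℕ} {r : List ℕ} (h1 : x < y) (h2 : y ≤ z)
    (hw : Bal (y :: z :: x :: r)) (hs : Bal (z :: x :: r)) (hr : Bal r) : Bal (z :: r) := by
  intro i
  have a1 := hw i
  have a2 := hs i
  have a3 := hr i
  simp only [List.count_cons, beq_iff_eq] at a1 a2 ⊢
  split_ifs at a1 a2 ⊢ <;> omega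

theorem RL_context {v v' : List ℕ} (hperm : v.Perm v') (h : RL v → RL v') :
    ∀ l : List ℕ, RL (l ++ v) → RL (l ++ v')
  | [] => h
  | c :: l' => by
    intro hrl
    rw [List.cons_append] at hrl ⊢
    rw [RL_cons] at hrl ⊢
    refine ⟨?_, RL_context hperm h l' hrl.2⟩
    exact Bal.perm (List.Perm.cons c ((hperm.append_left l'))) hrl.1

theorem RL_of_suffix {w t : List ℕ} (h : RL w) (ht : t <:+ w) : RL t :=
  fun s hs => h s (hs.trans ht)

theorem KStep_RL {w w' : List ℕ} (h : KStep w w') : RL w → RL w' := by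
  cases h with
  | k1 l r x y z h1 h2 =>
      refine RL_context (KStep.k1 [] r x y z h1 h2).perm ?_ l
      intro hrl
      have hw : Bal (x :: z :: y :: r) := hrl _ (List.suffix_refl _)
      have hy : Bal (y :: r) := hrl _ ⟨[x, z], rfl⟩
      have hrr : RL r := RL_of_suffix hrl ⟨[x, z, y], rfl⟩
      simp only [List.nil_append]
      rw [RL_cons, RL_cons, RL_cons]
      exact ⟨Bal.perm (KStep.k1 [] r x y z h1 h2).perm hw,
        bal_k1_fwd h1 h2 hw hy, hy, hrr⟩
  | k2 l r x y z h1 h2 =>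
      refine RL_context (KStep.k2 [] r x y z h1 h2).perm ?_ l
      intro hrl
      have hw : Bal (y :: x :: z :: r) := hrl _ (List.suffix_refl _)
      have hxz : Bal (x :: z :: r) := hrl _ ⟨[y], rfl⟩
      have hrr : RL r := RL_of_suffix hrl ⟨[y, x, z], rfl⟩
      have hzx : Bal (z :: x :: r) := by
        refine Bal.perm ?_ hxz
        exact List.Perm.swap z x r
      simp only [List.nil_append]
      rw [RL_cons, RL_cons, RL_cons]
      exact ⟨Bal.perm (KStep.k2 [] r x y z h1 h2).perm hw, hzx,
        bal_k2_fwd h1 h2 hxz (hrr _ (List.suffix_refl _)), hrr⟩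

theorem KStep_RL_rev {w w' : List ℕ} (h : KStep w w') : RL w' → RL w := by
  cases h with
  | k1 l r x y z h1 h2 =>
      refine RL_context (KStep.k1 [] r x y z h1 h2).perm.symm ?_ l
      intro hrl
      have hw : Bal (z :: x :: y :: r) := hrl _ (List.suffix_refl _)
      have hy : Bal (y :: r) := hrl _ ⟨[z, x], rfl⟩
      have hxy : Bal (x :: y :: r) := hrl _ ⟨[z], rfl⟩
      have hrr : RL r := RL_of_suffix hrl ⟨[z, x, y], rfl⟩
      simp only [List.nil_append]
      rw [RL_cons, RL_cons, RL_cons]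
      exact ⟨Bal.perm (KStep.k1 [] r x y z h1 h2).perm.symm hw,
        bal_k1_bwd h1 h2 hw hy (hrr _ (List.suffix_refl _)), hy, hrr⟩
  | k2 l r x y z h1 h2 =>
      refine RL_context (KStep.k2 [] r x y z h1 h2).perm.symm ?_ l
      intro hrl
      have hw : Bal (y :: z :: x :: r) := hrl _ (List.suffix_refl _)
      have hzx : Bal (z :: x :: r) := hrl _ ⟨[y], rfl⟩
      have hxr : Bal (x :: r) := hrl _ ⟨[y, z], rfl⟩
      have hrr : RL r := RL_of_suffix hrl ⟨[y, z, x], rfl⟩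
      have hxz : Bal (x :: z :: r) := by
        refine Bal.perm ?_ hzx
        exact List.Perm.swap x z r
      simp only [List.nil_append]
      rw [RL_cons, RL_cons, RL_cons]
      exact ⟨Bal.perm (KStep.k2 [] r x y z h1 h2).perm.symm hw, hxz,
        bal_k2_bwd h1 h2 hw hzx (hrr _ (List.suffix_refl _)), hrr⟩

theorem Keq_RL {w w' : List ℕ} (h : Keq w w') : RL w ↔ RL w' := by
  induction h with
  | rel a b hab => exact ⟨KStep_RL hab, KStep_RL_rev hab⟩
  | refl a => exact Iff.rfl
  | symm a b _ ih => exact ih.symm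
  | trans a b c _ _ ih1 ih2 => exact ih1.trans ih2


/-! ### Row insertion -/

def bumpRow (x : ℕ) : List ℕ → Option (ℕ × List ℕ)
  | [] => none
  | a :: R => if a ≤ x then (bumpRow x R).map (fun p => (p.1, a :: p.2)) else some (a, x :: R)

def rinsert : List (List ℕ) → ℕ → List (List ℕ)
  | [], x => [[x]]
  | R :: P, x =>
    match bumpRow x R with
    | none => (R ++ [x]) :: P
    | some (y, R') => R' :: rinsert P y

def chain : List (List ℕ) → ℕ → List ℕ
  | [], x => [x]
  | R :: P, x =>
    match bumpRow x R with
    | none => [x]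
    | some (y, _) => x :: chain P y

def Srt (P : List (List ℕ)) : Prop := ∀ R ∈ P, R.Pairwise (· ≤ ·)

def rowword (P : List (List ℕ)) : List ℕ := P.reverse.flatten

theorem bump_none_iff {x : ℕ} {R : List ℕ} : bumpRow x R = none ↔ ∀ a ∈ R, a ≤ x := by
  induction R with
  | nil => simp [bumpRow]
  | cons a R ih =>
    by_cases h : a ≤ x
    · simp [bumpRow, h, Option.map_eq_none_iff, ih]
    · simp only [bumpRow, if_neg h]
      constructor
      · intro hh; simp at hh
      · intro hall; exact absurd (hall a (by simp)) h

theorem bump_decomp {x y : ℕ} {R R' : List ℕ} (h : bumpRow x R = some (y, R')) :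
    ∃ A B, R = A ++ y :: B ∧ R' = A ++ x :: B ∧ (∀ a ∈ A, a ≤ x) ∧ x < y := by
  induction R generalizing R' with
  | nil => simp [bumpRow] at h
  | cons a R ih =>
    by_cases ha : a ≤ x
    · simp only [bumpRow, if_pos ha] at h
      rcases hb : bumpRow x R with _ | ⟨y', R''⟩
      · rw [hb] at h; simp at h
      · rw [hb] at h
        simp only [Option.map_some, Option.some.injEq, Prod.mk.injEq] at h
        obtain ⟨h1, h2⟩ := h
        obtain ⟨A, B, e1, e2, e3, e4⟩ := ih (h1 ▸ hb)
        refine ⟨a :: A, B, by simp [e1], by simp [← h2, e2], ?_, e4⟩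
        intro a' ha'
        rcases List.mem_cons.1 ha' with hc | hc
        · subst hc; exact ha
        · exact e3 _ hc
    · simp only [bumpRow, if_neg ha, Option.some.injEq, Prod.mk.injEq] at h
      obtain ⟨h1, h2⟩ := h
      exact ⟨[], R, by simp [h1], by simp [← h2], by simp, by omega⟩

theorem bump_count {x y : ℕ} {R R' : List ℕ} (h : bumpRow x R = some (y, R')) (a : ℕ) :
    R'.count a + (if y = a then 1 else 0) = R.count a + (if x = a then 1 else 0) := by
  obtain ⟨A, B, e1, e2, _, _⟩ := bump_decomp h
  subst e1; subst e2
  simp only [List.count_append, List.count_cons, beq_iff_eq]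
  split_ifs <;> omega

theorem bump_lt {x y : ℕ} {R R' : List ℕ} (h : bumpRow x R = some (y, R')) : x < y :=
  (bump_decomp h).choose_spec.choose_spec.2.2.2

theorem bump_min {x y : ℕ} {R R' : List ℕ} (hs : R.Pairwise (· ≤ ·))
    (h : bumpRow x R = some (y, R')) : ∀ a ∈ R, x < a → y ≤ a := by
  obtain ⟨A, B, e1, _, hA, hxy⟩ := bump_decomp h
  subst e1
  rw [List.pairwise_append] at hs
  obtain ⟨_, s2, _⟩ := hs
  rw [List.pairwise_cons] at s2
  intro a ha hxa
  rcases List.mem_append.1 ha with h' | h'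
  · exact absurd (hA a h') (by omega)
  · rcases List.mem_cons.1 h' with h' | h'
    · omega
    · exact s2.1 a h'

theorem bump_mem {x y : ℕ} {R R' : List ℕ} (h : bumpRow x R = some (y, R')) : y ∈ R := by
  obtain ⟨A, B, e1, _, _, _⟩ := bump_decomp h
  subst e1; simp

theorem bump_sorted {x y : ℕ} {R R' : List ℕ} (hs : R.Pairwise (· ≤ ·))
    (h : bumpRow x R = some (y, R')) : R'.Pairwise (· ≤ ·) := by
  obtain ⟨A, B, e1, e2, hA, hxy⟩ := bump_decomp h
  subst e1; subst e2
  rw [List.pairwise_append] at hs ⊢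
  obtain ⟨s1, s2, s3⟩ := hs
  rw [List.pairwise_cons] at s2
  refine ⟨s1, ?_, ?_⟩
  · rw [List.pairwise_cons]
    exact ⟨fun b hb => le_trans (le_of_lt hxy) (s2.1 b hb), s2.2⟩
  · intro a ha b hb
    rcases List.mem_cons.1 hb with hc | hc
    · exact hc ▸ hA a ha
    · exact s3 a ha b (by simp [hc])

theorem bump_elem {x y : ℕ} {R R' : List ℕ} (h : bumpRow x R = some (y, R')) :
    ∀ a ∈ R', a = x ∨ a ∈ R := by
  obtain ⟨A, B, e1, e2, _, _⟩ := bump_decomp h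
  subst e1; subst e2
  intro a ha
  rcases List.mem_append.1 ha with hc | hc
  · exact Or.inr (by simp [hc])
  · rcases List.mem_cons.1 hc with hc | hc
    · exact Or.inl hc
    · exact Or.inr (by simp [hc])

theorem chain_cons (P : List (List ℕ)) (x : ℕ) : ∃ t, chain P x = x :: t := by
  cases P with
  | nil => exact ⟨[], rfl⟩
  | cons R P =>
    rcases h : bumpRow x R with _ | ⟨y, R'⟩
    · exact ⟨[], by simp [chain, h]⟩
    · exact ⟨chain P y, by simp [chain, h]⟩

theorem chain_ge {P : List (List ℕ)} {x : ℕ} :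
    ∀ {d y}, (chain P x)[d]? = some y → x + d ≤ y := by
  induction P generalizing x with
  | nil =>
    intro d y h
    simp [chain] at h
    match d, h with
    | 0, h => simp at h; omega
  | cons R P ih =>
    intro d y h
    rcases hb : bumpRow x R with _ | ⟨y', R'⟩
    · simp [chain, hb] at h
      match d, h with
      | 0, h => simp at h; omega
    · simp only [chain, hb] at h
      match d, h with
      | 0, h => simp at h; omega
      | d + 1, h =>
        simp only [List.getElem?_cons_succ] at h
        have := ih h
        have := bump_lt hb
        omega

theorem rinsert_row_count (P : List (List ℕ)) (x : ℕ) (k a : ℕ) :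
    ((rinsert P x).getD k []).count a
      + (if (chain P x)[k+1]? = some a then 1 else 0)
    = ((P.getD k []).count a)
      + (if (chain P x)[k]? = some a then 1 else 0) := by
  induction P generalizing x k with
  | nil =>
    match k with
    | 0 => simp [rinsert, chain, List.count_cons]
    | k + 1 => simp [rinsert, chain]
  | cons R P ih =>
    rcases hb : bumpRow x R with _ | ⟨y, R'⟩
    · match k with
      | 0 => simp [rinsert, chain, hb, List.count_append, List.count_cons]
      | k + 1 => simp [rinsert, chain, hb]
    · match k with
      | 0 =>
        simp only [rinsert, chain, hb, List.getD_cons_zero, List.getElem?_cons_succ,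
          List.getElem?_cons_zero]
        obtain ⟨t, ht⟩ := chain_cons P y
        rw [ht]
        simpa using bump_count hb a
      | k + 1 =>
        simp only [rinsert, chain, hb, List.getD_cons_succ, List.getElem?_cons_succ]
        exact ih y k

theorem rinsert_sorted {P : List (List ℕ)} (hs : Srt P) (x : ℕ) : Srt (rinsert P x) := by
  induction P generalizing x with
  | nil =>
    intro R hR
    simp only [rinsert] at hR
    rcases List.mem_cons.1 hR with h | h
    · simp [h]
    · simp at h
  | cons R P ih =>
    have hR := hs R (by simp)
    have hP : Srt P := fun S hS => hs S (by simp [hS])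
    rcases hb : bumpRow x R with _ | ⟨y, R'⟩
    · intro S hS
      simp only [rinsert, hb] at hS
      rcases List.mem_cons.1 hS with h | h
      · subst h
        rw [List.pairwise_append]
        exact ⟨hR, by simp, fun a ha b hb' => by
          simp at hb'; subst hb'; exact bump_none_iff.1 hb a ha⟩
      · exact hP S h
    · intro S hS
      simp only [rinsert, hb] at hS
      rcases List.mem_cons.1 hS with h | h
      · exact h ▸ bump_sorted hR hb
      · exact ih hP y S h

theorem rowword_cons (R : List ℕ) (P : List (List ℕ)) :
    rowword (R :: P) = rowword P ++ R := by
  simp [rowword]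

theorem keq_B1 : ∀ (B : List ℕ) (c x : ℕ), (∀ b ∈ B, c ≤ b) → B.Pairwise (· ≤ ·) → x < c →
    Keq (c :: (B ++ [x])) (c :: x :: B)
  | [], c, x, _, _, _ => Keq.refl _
  | b :: B', c, x, hB, hs, hx => by
    rw [List.pairwise_cons] at hs
    have IH := keq_B1 B' b x hs.1 hs.2 (lt_of_lt_of_le hx (hB b (by simp)))
    have step1 : Keq (c :: b :: (B' ++ [x])) (c :: b :: x :: B') := by
      simpa using IH.context [c] []
    refine Keq.trans (by simpa using step1) ?_
    refine Keq.symm (Keq.of_step ?_)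
    have := KStep.k2 [] B' x c b hx (hB b (by simp))
    simpa using this

theorem keq_B2 : ∀ (A : List ℕ) (y x : ℕ) (B : List ℕ), (∀ a ∈ A, a ≤ x) →
    A.Pairwise (· ≤ ·) → x < y → Keq (A ++ y :: x :: B) (y :: (A ++ x :: B))
  | [], y, x, B, _, _, _ => Keq.refl _
  | a :: A', y, x, B, hA, hs, hx => by
    rw [List.pairwise_cons] at hs
    have IH := keq_B2 A' y x B (fun a' ha' => hA a' (by simp [ha'])) hs.2 hx
    have step1 : Keq (a :: (A' ++ y :: x :: B)) (a :: y :: (A' ++ x :: B)) := by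
      simpa using IH.context [a] []
    refine Keq.trans (by simpa using step1) ?_
    have hax : a ≤ x := hA a (by simp)
    cases A' with
    | nil =>
      refine Keq.of_step ?_
      have := KStep.k1 [] B a x y hax hx
      simpa using this
    | cons a' A'' =>
      refine Keq.of_step ?_
      have ha' : a ≤ a' := hs.1 a' (by simp)
      have ha'x : a' < y := lt_of_le_of_lt (hA a' (by simp)) hx
      have := KStep.k1 [] (A'' ++ x :: B) a a' y ha' ha'x
      simpa using this

theorem bump_keq {x y : ℕ} {R R' : List ℕ} (hs : R.Pairwise (· ≤ ·))
    (h : bumpRow x R = some (y, R')) : Keq (R ++ [x]) (y :: R') := by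
  obtain ⟨A, B, e1, e2, hA, hxy⟩ := bump_decomp h
  subst e1; subst e2
  rw [List.pairwise_append] at hs
  obtain ⟨s1, s2, s3⟩ := hs
  rw [List.pairwise_cons] at s2
  have h1 : Keq (A ++ (y :: (B ++ [x]))) (A ++ (y :: x :: B)) := by
    exact (keq_B1 B y x s2.1 s2.2 hxy).append_left A
  refine Keq.trans (by simpa using h1) ?_
  exact keq_B2 A y x B hA s1 hxy

theorem keq_rinsert {P : List (List ℕ)} (hs : Srt P) (x : ℕ) :
    Keq (rowword P ++ [x]) (rowword (rinsert P x)) := by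
  induction P generalizing x with
  | nil => simpa [rowword, rinsert] using Keq.refl [x]
  | cons R P ih =>
    have hR := hs R (by simp)
    have hP : Srt P := fun S hS => hs S (by simp [hS])
    rcases hb : bumpRow x R with _ | ⟨y, R'⟩
    · simp only [rinsert, hb, rowword_cons]
      simpa using Keq.refl _
    · simp only [rinsert, hb, rowword_cons]
      have h1 : Keq (rowword P ++ R ++ [x]) (rowword P ++ ([y] ++ R')) := by
        have := (bump_keq hR hb).append_left (rowword P)
        simpa using this
      refine Keq.trans h1 ?_
      have h2 : Keq ((rowword P ++ [y]) ++ R') (rowword (rinsert P y) ++ R') :=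
        (ih hP y).append_right R'
      simpa using h2


/-! ### The insertion tableau of a word -/

def Pt (w : List ℕ) : List (List ℕ) := w.foldl rinsert []

theorem Pt_append (w : List ℕ) (x : ℕ) : Pt (w ++ [x]) = rinsert (Pt w) x := by
  simp [Pt]

theorem Pt_sorted (w : List ℕ) : Srt (Pt w) := by
  induction w using List.reverseRecOn with
  | nil => intro R hR; simp [Pt] at hR
  | append_singleton w x ih => rw [Pt_append]; exact rinsert_sorted ih x

theorem rinsert_elem (P : List (List ℕ)) (x : ℕ) (k : ℕ) :
    ∀ a ∈ (rinsert P x).getD k [], a ∈ P.getD k [] ∨ (chain P x)[k]? = some a := by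
  induction P generalizing x k with
  | nil =>
    intro a ha
    match k with
    | 0 =>
      simp only [rinsert, List.getD_cons_zero] at ha
      simp only [List.mem_singleton] at ha
      exact Or.inr (by simp [chain, ha])
    | k + 1 => simp [rinsert] at ha
  | cons R P ih =>
    intro a ha
    rcases hb : bumpRow x R with _ | ⟨y, R'⟩
    · match k with
      | 0 =>
        simp only [rinsert, hb, List.getD_cons_zero] at ha
        rcases List.mem_append.1 ha with h | h
        · exact Or.inl (by simpa using h)
        · simp only [List.mem_singleton] at h
          exact Or.inr (by simp [chain, hb, h])
      | k + 1 =>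
        simp only [rinsert, hb, List.getD_cons_succ] at ha
        exact Or.inl (by simpa using ha)
    · match k with
      | 0 =>
        simp only [rinsert, hb, List.getD_cons_zero] at ha
        rcases bump_elem hb a ha with h | h
        · exact Or.inr (by simp [chain, hb, h])
        · exact Or.inl (by simpa using h)
      | k + 1 =>
        simp only [rinsert, hb, List.getD_cons_succ] at ha
        rcases ih y k a ha with h | h
        · exact Or.inl (by simpa using h)
        · refine Or.inr ?_
          rw [show chain (R :: P) x = x :: chain P y from by simp [chain, hb],
            List.getElem?_cons_succ]
          exact h

theorem Pt_valid (w : List ℕ) (hw : ∀ x ∈ w, 1 ≤ x) :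
    ∀ k, ∀ a ∈ (Pt w).getD k [], k + 1 ≤ a := by
  induction w using List.reverseRecOn with
  | nil => intro k a ha; simp [Pt] at ha
  | append_singleton w x ih =>
    intro k a ha
    rw [Pt_append] at ha
    rcases rinsert_elem (Pt w) x k a ha with h | h
    · exact ih (fun y hy => hw y (by simp [hy])) k a h
    · have := chain_ge h
      have : 1 ≤ x := hw x (by simp)
      omega

theorem chain_succ_lt {P : List (List ℕ)} {x : ℕ} :
    ∀ {k c d}, (chain P x)[k]? = some c → (chain P x)[k+1]? = some d → c < d := by
  induction P generalizing x with
  | nil =>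
    intro k c d h1 h2
    simp only [chain] at h2
    match k with
    | 0 => simp at h2
  | cons R P ih =>
    intro k c d h1 h2
    rcases hb : bumpRow x R with _ | ⟨y, R'⟩
    · simp only [chain, hb] at h2
      match k with
      | 0 => simp at h2
    · simp only [chain, hb] at h1 h2
      match k with
      | 0 =>
        simp only [List.getElem?_cons_zero, Option.some.injEq] at h1
        simp only [List.getElem?_cons_succ] at h2
        obtain ⟨t, ht⟩ := chain_cons P y
        rw [ht] at h2
        match h2 with
        | h2 =>
          have hy : d = y ∨ d ∈ t := by
            rcases Nat.eq_zero_or_pos 0 with _ | _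
            · exact Or.inl (by simp at h2; omega)
            · exact Or.inl (by simp at h2; omega)
          subst h1
          simp only [List.getElem?_cons_zero, Option.some.injEq] at h2
          subst h2
          exact bump_lt hb
      | k + 1 =>
        simp only [List.getElem?_cons_succ] at h1 h2
        exact ih h1 h2

/-- Homing counts are monotone: there are at least as many `k+1`'s in row `k`
as `k+2`'s in row `k+1`. -/
theorem Pt_home_mono (w : List ℕ) (hw : ∀ x ∈ w, 1 ≤ x) (k : ℕ) :
    ((Pt w).getD (k+1) []).count (k+2) ≤ ((Pt w).getD k []).count (k+1) := by
  induction w using List.reverseRecOn with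
  | nil => simp [Pt]
  | append_singleton w x ih =>
    have hx : 1 ≤ x := hw x (by simp)
    have ih' := ih (fun y hy => hw y (by simp [hy]))
    rw [Pt_append]
    have e1 := rinsert_row_count (Pt w) x k (k+1)
    have e2 := rinsert_row_count (Pt w) x (k+1) (k+2)
    have hz1 : (chain (Pt w) x)[k+1]? ≠ some (k+1) := by
      intro h; have := chain_ge h; omega
    have hz2 : (chain (Pt w) x)[k+2]? ≠ some (k+2) := by
      intro h; have := chain_ge h; omega
    rw [if_neg hz1] at e1
    rw [if_neg hz2] at e2
    -- staircase: if chain (k+1) = k+2 then chain k = k+1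
    by_cases hs : (chain (Pt w) x)[k+1]? = some (k+2)
    · have hk : (chain (Pt w) x)[k]? = some (k+1) := by
        rcases hck : (chain (Pt w) x)[k]? with _ | c
        · exfalso
          have : (k+1) < (chain (Pt w) x).length := List.getElem?_eq_some_iff.1 hs |>.choose
          have : (chain (Pt w) x)[k]? ≠ none := by
            rw [ne_eq, List.getElem?_eq_none_iff]
            omega
          exact this hck
        · have h1 := chain_ge hck
          have h2 := chain_succ_lt hck hs
          have : c = k + 1 := by omega
          simp [this]
      rw [if_pos hs] at e2
      rw [if_pos hk] at e1
      omega
    · rw [if_neg hs] at e2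
      split_ifs at e1 <;> omega


/-! ### The tableau lemmas -/

theorem sorted_le_getLast : ∀ {l : List ℕ}, l.Pairwise (· ≤ ·) → ∀ a ∈ l, ∀ (h : l ≠ []),
    a ≤ l.getLast h
  | [], _, a, ha, h => by simp at ha
  | b :: l, hl, a, ha, h => by
    rw [List.pairwise_cons] at hl
    cases l with
    | nil =>
      rcases List.mem_cons.1 ha with rfl | ha
      · simp
      · simp at ha
    | cons c l' =>
      rw [List.getLast_cons (by simp)]
      rcases List.mem_cons.1 ha with rfl | ha
      · exact hl.1 _ (List.getLast_mem _)
      · exact sorted_le_getLast hl.2 a ha (by simp)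

theorem suffix_append_split {t X R : List ℕ} (h : t <:+ X ++ R) :
    t <:+ R ∨ ∃ s, s <:+ X ∧ t = s ++ R := by
  induction X with
  | nil => exact Or.inl (by simpa using h)
  | cons x X' ih =>
    rw [List.cons_append, List.suffix_cons_iff] at h
    rcases h with rfl | h
    · exact Or.inr ⟨x :: X', List.suffix_refl _, rfl⟩
    · rcases ih h with h1 | ⟨s, hs, rfl⟩
      · exact Or.inl h1
      · exact Or.inr ⟨s, hs.trans (List.suffix_cons x X'), rfl⟩

theorem suffix_flatten_rev {P : List (List ℕ)} {t : List ℕ}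
    (h : t <:+ (P.reverse).flatten) :
    ∃ k t', t' <:+ P.getD k [] ∧ t = t' ++ ((P.take k).reverse).flatten := by
  induction P generalizing t with
  | nil =>
    have : t = [] := List.suffix_nil.1 (by simpa using h)
    subst this
    exact ⟨0, [], List.nil_suffix, by simp⟩
  | cons R P ih =>
    have h' : t <:+ (P.reverse).flatten ++ R := by simpa using h
    rcases suffix_append_split h' with h1 | ⟨s, hs, rfl⟩
    · exact ⟨0, t, by simpa using h1, by simp⟩
    · obtain ⟨k, t', ht', rfl⟩ := ih hs
      refine ⟨k + 1, t', by simpa using ht', ?_⟩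
      simp [List.take_succ_cons, List.append_assoc]

theorem take_succ_getD {P : List (List ℕ)} {k : ℕ} (hk : k < P.length) :
    P.take (k + 1) = P.take k ++ [P.getD k []] := by
  rw [List.take_succ]
  congr 1
  rw [List.getD_eq_getElem _ _ hk]
  simp [List.getElem?_eq_getElem hk]

theorem mem_take_getD {P : List (List ℕ)} {k : ℕ} {R : List ℕ} (h : R ∈ P.take k) :
    ∃ j, j < k ∧ P.getD j [] = R := by
  obtain ⟨i, hi, hR⟩ := List.mem_iff_getElem.1 h
  have hilen : i < P.length := lt_of_lt_of_le hi (by simp [List.length_take])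
  have hik : i < k := lt_of_lt_of_le hi (by simp [List.length_take])
  refine ⟨i, hik, ?_⟩
  rw [List.getD_eq_getElem _ _ hilen, ← hR, List.getElem_take]

theorem tableau_const {P : List (List ℕ)} (hsrt : Srt P)
    (hv : ∀ k, ∀ a ∈ P.getD k [], k + 1 ≤ a)
    (hrl : RL (rowword P)) : ∀ k, ∀ a ∈ P.getD k [], a = k + 1 := by
  intro k
  induction k using Nat.strong_induction_on with
  | _ k IH =>
    intro a ha
    have hLne : P.getD k [] ≠ [] := by intro h; rw [h] at ha; simp at ha
    have hk : k < P.length := by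
      by_contra h
      push_neg at h
      exact hLne (List.getD_eq_default _ _ h)
    have hLmem : P.getD k [] ∈ P := by
      rw [List.getD_eq_getElem _ _ hk]; exact List.getElem_mem _
    have hsort : (P.getD k []).Pairwise (· ≤ ·) := hsrt _ hLmem
    set M := (P.getD k []).getLast hLne with hM
    have haM : a ≤ M := sorted_le_getLast hsort a ha hLne
    have hMv : k + 1 ≤ M := hv k M (List.getLast_mem _)
    have hMle : M ≤ k + 1 := by
      by_contra hgt
      push_neg at hgt
      -- M ≥ k+2; build the contradicting suffix
      have hdecomp : rowword P =
          (((P.drop (k+1)).reverse).flatten ++ (P.getD k []).dropLast)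
            ++ (M :: ((P.take k).reverse).flatten) := by
        conv_lhs => rw [rowword, ← List.take_append_drop (k+1) P]
        rw [List.reverse_append, List.flatten_append, take_succ_getD hk,
          List.reverse_append]
        simp only [List.reverse_singleton, List.singleton_append, List.flatten_cons]
        conv_lhs => rw [← List.dropLast_append_getLast hLne]
        simp only [List.append_assoc, List.singleton_append]
        rfl
      have hsuf : (M :: ((P.take k).reverse).flatten) <:+ rowword P :=
        ⟨_, hdecomp.symm⟩
      have hbal := hrl _ hsuf (M - 2)
      have hMeq1 : M - 2 + 2 = M := by omega
      have hMeq2 : M - 2 + 1 = M - 1 := by omega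
      rw [hMeq1, hMeq2] at hbal
      have hnot : (M - 1) ∉ (M :: ((P.take k).reverse).flatten) := by
        intro hmem
        rcases List.mem_cons.1 hmem with h | h
        · omega
        · obtain ⟨R, hRmem, hmem2⟩ := List.mem_flatten.1 h
          rw [List.mem_reverse] at hRmem
          obtain ⟨j, hj, rfl⟩ := mem_take_getD hRmem
          have := IH j hj _ hmem2
          omega
      rw [List.count_eq_zero.2 hnot] at hbal
      have : 0 < (M :: ((P.take k).reverse).flatten).count M := by
        rw [List.count_cons]
        simp
      omega
    have := hv k a ha
    omega

theorem count_of_all_eq {t : List ℕ} {v : ℕ} (h : ∀ a ∈ t, a = v) (b : ℕ) :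
    t.count b = if b = v then t.length else 0 := by
  split_ifs with hb
  · subst hb
    rw [List.count_eq_length]
    intro a ha
    exact (h a ha).symm
  · rw [List.count_eq_zero]
    intro hmem
    exact hb (h b hmem)

theorem count_F {P : List (List ℕ)} (hconst : ∀ k, ∀ a ∈ P.getD k [], a = k + 1) :
    ∀ k j, (((P.take k).reverse).flatten).count (j + 1)
      = if j < k then (P.getD j []).length else 0 := by
  intro k
  induction k with
  | zero => simp
  | succ k ihk =>
    intro j
    by_cases hk : k < P.length
    · rw [take_succ_getD hk, List.reverse_append]
      simp only [List.reverse_singleton, List.singleton_append, List.flatten_cons,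
        List.count_append]
      rw [count_of_all_eq (hconst k) (j + 1), ihk j]
      by_cases hj : j = k
      · subst hj
        rw [if_pos rfl, if_neg (lt_irrefl j), if_pos (by omega)]
        omega
      · rw [if_neg (by omega : ¬ (j + 1 = k + 1))]
        split_ifs <;> omega
    · push_neg at hk
      have h1 : P.take (k + 1) = P := List.take_of_length_le (by omega)
      have h2 : P.take k = P := List.take_of_length_le hk
      rw [h1]
      conv_lhs => rw [← h2]
      rw [ihk j]
      by_cases hj : j < k
      · rw [if_pos hj, if_pos (by omega)]
      · rw [if_neg hj]
        by_cases hj2 : j < k + 1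
        · have hjk : j = k := by omega
          subst hjk
          rw [if_pos hj2, List.getD_eq_default _ _ hk]
          rfl
        · rw [if_neg hj2]

theorem RL_superstandard {P : List (List ℕ)}
    (hconst : ∀ k, ∀ a ∈ P.getD k [], a = k + 1)
    (hmono : ∀ k, (P.getD (k + 1) []).length ≤ (P.getD k []).length) :
    RL (rowword P) := by
  intro t ht
  obtain ⟨k, t', ht', rfl⟩ := suffix_flatten_rev ht
  intro i
  rw [List.count_append, List.count_append]
  rw [count_F hconst k (i + 1), count_F hconst k i]
  have hsub : ∀ a ∈ t', a = k + 1 := fun a ha => hconst k a (ht'.subset ha)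
  have hlen : t'.length ≤ (P.getD k []).length := ht'.length_le
  rw [count_of_all_eq hsub (i+2), count_of_all_eq hsub (i+1)]
  have hm1 := hmono i
  rcases Nat.lt_trichotomy (i + 1) k with h | h | h
  · have e1 : ¬ (i + 2 = k + 1) := by omega
    have e2 : ¬ (i + 1 = k + 1) := by omega
    rw [if_neg e1, if_neg e2, if_pos h, if_pos (by omega : i < k)]
    omega
  · subst h
    have e1 : (i + 2 = i + 1 + 1) := by omega
    rw [if_pos e1, if_neg (by omega : ¬ (i + 1 = i + 1 + 1)),
      if_neg (by omega : ¬ (i + 1 < i + 1)), if_pos (by omega : i < i + 1)]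
    omega
  · rw [if_neg (by omega : ¬ (i + 2 = k + 1)), if_neg (by omega : ¬ (i + 1 < k))]
    split_ifs <;> omega


/-! ### More helpers -/

theorem bump_some_of {y a : ℕ} {R : List ℕ} (hs : R.Pairwise (· ≤ ·)) (ha : a ∈ R) (hy : y < a)
    (hmin : ∀ b ∈ R, y < b → a ≤ b) : ∃ R', bumpRow y R = some (a, R') := by
  rcases hb : bumpRow y R with _ | ⟨y0, R'⟩
  · exact absurd (bump_none_iff.1 hb a ha) (by omega)
  · have h1 := bump_mem hb
    have h2 := bump_lt hb
    have h3 := bump_min hs hb a ha hy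
    have h4 := hmin y0 h1 h2
    exact ⟨R', by rw [le_antisymm h3 h4]⟩

theorem rinsert_length : ∀ (P : List (List ℕ)) (x : ℕ),
    (rinsert P x).length ≤ P.length + 1
  | [], x => by simp [rinsert]
  | R :: P, x => by
    rcases hb : bumpRow x R with _ | ⟨y, R'⟩
    · simp [rinsert, hb]
    · simp only [rinsert, hb, List.length_cons]
      have := rinsert_length P y
      omega

theorem map_range_getD (u : List ℕ) :
    (List.range u.length).map (fun q => u.getD q 0) = u := by
  apply List.ext_getElem
  · simp
  · intro n h1 h2
    simp only [List.getElem_map, List.getElem_range]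
    exact List.getD_eq_getElem u 0 h2

theorem nat_min?_spec {l : List ℕ} {a : ℕ} (h : l.min? = some a) :
    a ∈ l ∧ ∀ b ∈ l, a ≤ b := by
  constructor
  · exact List.min?_mem h
  · exact (List.le_min?_iff h).1 (le_refl a)

theorem nat_max?_mem {l : List ℕ} {a : ℕ} (h : l.max? = some a) : a ∈ l :=
  List.max?_mem h

theorem keq_Pt (w : List ℕ) : Keq w (rowword (Pt w)) := by
  induction w using List.reverseRecOn with
  | nil => exact Keq.refl []
  | append_singleton w x ih =>
    rw [Pt_append]
    exact Keq.trans (ih.append_right [x]) (keq_rinsert (Pt_sorted w) x)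

/-! ### The bridge -/

def cnt (acc : List (List ℕ)) (q : ℕ) : ℕ := acc.countP (fun sq => decide (q ∈ sq))

def lvlg (u : List ℕ) (g : ℕ → ℕ) (k a : ℕ) : ℕ :=
  (List.range u.length).countP (fun q => decide (g q = k + 1 ∧ u.getD q 0 = a))

theorem cnt_append (acc : List (List ℕ)) (s : List ℕ) (q : ℕ) :
    cnt (acc ++ [s]) q = cnt acc q + (if q ∈ s then 1 else 0) := by
  simp only [cnt, List.countP_append, List.countP_singleton]
  by_cases h : q ∈ s <;> simp [h]

inductive ChainSpec (u : List ℕ) (g : ℕ → ℕ) : ℕ → List ℕ → Prop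
  | nil (t : ℕ) : ChainSpec u g t []
  | cons (t : ℕ) (q : ℕ) (qs : List ℕ) : q < u.length → g q = t →
      ChainSpec u g (t + 1) qs → ChainSpec u g t (q :: qs)

theorem chainspec_mem {u : List ℕ} {g : ℕ → ℕ} :
    ∀ {t qs}, ChainSpec u g t qs → ∀ q ∈ qs, q < u.length ∧ t ≤ g q := by
  intro t qs h
  induction h with
  | nil => intro q hq; simp at hq
  | cons t q qs hq hgq _ ih =>
    intro r hr
    rcases List.mem_cons.1 hr with rfl | hr
    · exact ⟨hq, le_of_eq hgq.symm⟩
    · have := ih r hr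
      exact ⟨this.1, by omega⟩

theorem chainspec_congr {u : List ℕ} {g g' : ℕ → ℕ} :
    ∀ {t qs}, ChainSpec u g t qs → (∀ q ∈ qs, g' q = g q) → ChainSpec u g' t qs := by
  intro t qs h
  induction h with
  | nil => intro _; exact ChainSpec.nil _
  | cons t q qs hq hgq hcs ih =>
    intro hgg
    exact ChainSpec.cons t q qs hq (by rw [hgg q (by simp)]; exact hgq)
      (ih (fun r hr => hgg r (by simp [hr])))

theorem countP_point {l : List ℕ} (hl : l.Nodup) {q : ℕ} (hq : q ∈ l) (f f' : ℕ → Bool)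
    (h : ∀ r ∈ l, r ≠ q → f' r = f r) :
    l.countP f' + (if f q then 1 else 0) = l.countP f + (if f' q then 1 else 0) := by
  induction l with
  | nil => simp at hq
  | cons r l ih =>
    rw [List.nodup_cons] at hl
    rcases List.mem_cons.1 hq with rfl | hq2
    · have heq : l.countP f' = l.countP f :=
        List.countP_congr (fun x hx => by
          rw [h x (by simp [hx]) (by rintro rfl; exact hl.1 hx)])
      rw [List.countP_cons, List.countP_cons, heq]
      by_cases h1 : f q <;> by_cases h2 : f' q <;> simp [h1, h2]
    · have hrq : r ≠ q := by rintro rfl; exact hl.1 hq2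
      rw [List.countP_cons, List.countP_cons, h r (by simp) hrq]
      have := ih hl.2 hq2 (fun x hx hxq => h x (by simp [hx]) hxq)
      omega


theorem ite_cond_and_true {c d : Prop} [Decidable c] [Decidable d] (hd : d) :
    (if c ∧ d then (1:ℕ) else 0) = if c then 1 else 0 := by
  by_cases hc : c <;> simp [hc, hd]

theorem ite_cond_and_false {c d : Prop} [Decidable c] [Decidable d] (hd : ¬ d) :
    (if c ∧ d then (1:ℕ) else 0) = 0 := by simp [hd]

theorem lvl_update (u : List ℕ) :
    ∀ (qs : List ℕ) (g : ℕ → ℕ) (t : ℕ), ChainSpec u g t qs → ∀ k a,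
    lvlg u (fun r => g r + (if r ∈ qs then 1 else 0)) k a
      + (if ((qs.map (fun q => u.getD q 0))[k + 1 - t]? = some a ∧ t ≤ k + 1)
          then 1 else 0)
    = lvlg u g k a
      + (if ((qs.map (fun q => u.getD q 0))[k - t]? = some a ∧ t ≤ k)
          then 1 else 0) := by
  intro qs
  induction qs with
  | nil =>
    intro g t _ k a
    simp only [List.map_nil, List.getElem?_nil]
    have : lvlg u (fun r => g r + (if r ∈ ([] : List ℕ) then 1 else 0)) k a
        = lvlg u g k a := by
      refine List.countP_congr (fun x hx => ?_)
      simp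
    rw [this]
    simp
  | cons q qs ih =>
    intro g t hcs k a
    cases hcs with
    | cons _ _ _ hq hgq hcs' =>
    set g1 : ℕ → ℕ := fun r => g r + (if r = q then 1 else 0) with hg1def
    have hqnot : q ∉ qs := by
      intro hmem
      have := (chainspec_mem hcs' q hmem).2
      omega
    have hcs1 : ChainSpec u g1 (t + 1) qs := by
      refine chainspec_congr hcs' (fun r hr => ?_)
      have hne : r ≠ q := by rintro rfl; exact hqnot hr
      simp [hg1def, hne]
    have hLeq : lvlg u (fun r => g r + (if r ∈ q :: qs then 1 else 0)) k a
        = lvlg u (fun r => g1 r + (if r ∈ qs then 1 else 0)) k a := by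
      refine List.countP_congr (fun x hx => ?_)
      have hfun : g x + (if x ∈ q :: qs then 1 else 0) = g1 x + (if x ∈ qs then 1 else 0) := by
        by_cases hrq : x = q
        · subst hrq; simp [hg1def, hqnot]
        · simp [hg1def, hrq, List.mem_cons]
      simp only [decide_eq_true_eq]
      rw [hfun]
    have hIH := ih g1 (t + 1) hcs1 k a
    have hA : lvlg u g1 k a + (if (t = k + 1 ∧ u.getD q 0 = a) then 1 else 0)
        = lvlg u g k a + (if (t + 1 = k + 1 ∧ u.getD q 0 = a) then 1 else 0) := by
      have hpt := countP_point (List.nodup_range (n := u.length)) (List.mem_range.2 hq)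
        (fun r => decide (g r = k + 1 ∧ u.getD r 0 = a))
        (fun r => decide (g1 r = k + 1 ∧ u.getD r 0 = a))
        (fun r _ hrq => by simp [hg1def, hrq])
      simp only [decide_eq_true_eq] at hpt
      have hg1q : g1 q = g q + 1 := by simp [hg1def]
      rw [hg1q, hgq] at hpt
      exact hpt
    rw [hLeq]
    rcases Nat.lt_trichotomy (k + 1) t with hlt | heq | hgt
    · -- k + 1 < t
      rw [ite_cond_and_false (by omega : ¬ t ≤ k + 1),
        ite_cond_and_false (by omega : ¬ t ≤ k)]
      rw [ite_cond_and_false (by omega : ¬ t + 1 ≤ k + 1),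
        ite_cond_and_false (by omega : ¬ t + 1 ≤ k)] at hIH
      have e1 : (if (t = k + 1 ∧ u.getD q 0 = a) then (1:ℕ) else 0) = 0 := by
        simp only [ite_eq_right_iff]
        rintro ⟨h1, _⟩; omega
      have e2 : (if (t + 1 = k + 1 ∧ u.getD q 0 = a) then (1:ℕ) else 0) = 0 := by
        simp only [ite_eq_right_iff]
        rintro ⟨h1, _⟩; omega
      rw [e1, e2] at hA
      omega
    · -- k + 1 = t
      have i1 : k + 1 - t = 0 := by omega
      rw [List.map_cons, i1]
      simp only [List.getElem?_cons_zero, Option.some.injEq]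
      rw [ite_cond_and_true (by omega : t ≤ k + 1),
        ite_cond_and_false (by omega : ¬ t ≤ k)]
      rw [ite_cond_and_false (by omega : ¬ t + 1 ≤ k + 1),
        ite_cond_and_false (by omega : ¬ t + 1 ≤ k)] at hIH
      have e1 : (if (t = k + 1 ∧ u.getD q 0 = a) then (1:ℕ) else 0)
          = (if u.getD q 0 = a then 1 else 0) := by
        refine if_congr ?_ rfl rfl
        constructor
        · rintro ⟨_, h2⟩; exact h2
        · intro h2; exact ⟨by omega, h2⟩
      have e2 : (if (t + 1 = k + 1 ∧ u.getD q 0 = a) then (1:ℕ) else 0) = 0 := by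
        simp only [ite_eq_right_iff]
        rintro ⟨h1, _⟩; omega
      rw [e1, e2] at hA
      omega
    · -- t < k + 1, i.e. t ≤ k
      have i1 : k + 1 - t = (k - t) + 1 := by omega
      rw [List.map_cons, i1, List.getElem?_cons_succ]
      rw [ite_cond_and_true (by omega : t ≤ k + 1)]
      rw [ite_cond_and_true (by omega : t + 1 ≤ k + 1)] at hIH
      have i2 : k + 1 - (t + 1) = k - t := by omega
      rw [i2] at hIH
      rcases Nat.lt_or_ge t k with hlt2 | hge2
      · -- t < k
        have i3 : k - t = (k - (t + 1)) + 1 := by omega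
        rw [ite_cond_and_true (by omega : t ≤ k), i3, List.getElem?_cons_succ]
        rw [ite_cond_and_true (by omega : t + 1 ≤ k), i3] at hIH
        have e1 : (if (t = k + 1 ∧ u.getD q 0 = a) then (1:ℕ) else 0) = 0 := by
          simp only [ite_eq_right_iff]
          rintro ⟨h1, _⟩; omega
        have e2 : (if (t + 1 = k + 1 ∧ u.getD q 0 = a) then (1:ℕ) else 0) = 0 := by
          simp only [ite_eq_right_iff]
          rintro ⟨h1, _⟩; omega
        rw [e1, e2] at hA
        omega
      · -- t = k
        have i3 : k - t = 0 := by omega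
        rw [ite_cond_and_true (by omega : t ≤ k), i3, List.getElem?_cons_zero]
        simp only [Option.some.injEq]
        rw [ite_cond_and_false (by omega : ¬ t + 1 ≤ k), i3] at hIH
        have e1 : (if (t = k + 1 ∧ u.getD q 0 = a) then (1:ℕ) else 0) = 0 := by
          simp only [ite_eq_right_iff]
          rintro ⟨h1, _⟩; omega
        have e2 : (if (t + 1 = k + 1 ∧ u.getD q 0 = a) then (1:ℕ) else 0)
            = (if u.getD q 0 = a then 1 else 0) := by
          refine if_congr ?_ rfl rfl
          constructor
          · rintro ⟨_, h2⟩; exact h2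
          · intro h2; exact ⟨by omega, h2⟩
        rw [e1, e2] at hA
        omega


inductive ExtChain (u : List ℕ) (acc S : List (List ℕ)) : ℕ → ℕ → List ℕ → Prop
  | nil (t y : ℕ) : bumpRow y (S.getD t []) = none → ExtChain u acc S t y []
  | cons (t y q : ℕ) (os : List ℕ) : q < u.length → cnt acc q = t + 1 →
      (∃ R', bumpRow y (S.getD t []) = some (u.getD q 0, R')) →
      ExtChain u acc S (t + 1) (u.getD q 0) os → ExtChain u acc S t y (q :: os)

theorem ext_spec (u : List ℕ) (acc S : List (List ℕ))
    (hrows : ∀ k a, ((S.getD k []).count a) = lvlg u (cnt acc) k a)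
    (hsrt : Srt S) :
    ∀ (fuel t y e : ℕ), S.length ≤ fuel + t → u.getD e 0 = y →
      ExtChain u acc S t y (OrthoBij.extendSeqP u acc fuel (t + 2) e) := by
  have hsort_row : ∀ t, (S.getD t []).Pairwise (· ≤ ·) := by
    intro t
    by_cases h : t < S.length
    · exact hsrt _ (by rw [List.getD_eq_getElem _ _ h]; exact List.getElem_mem _)
    · rw [List.getD_eq_default _ _ (by omega)]; exact List.Pairwise.nil
  intro fuel
  induction fuel with
  | zero =>
    intro t y e hlen hy
    rw [show OrthoBij.extendSeqP u acc 0 (t + 2) e = [] from rfl]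
    refine ExtChain.nil t y ?_
    rw [List.getD_eq_default _ _ (by omega : S.length ≤ t)]
    rfl
  | succ fuel ih =>
    intro t y e hlen hy
    have hunfold : OrthoBij.extendSeqP u acc (fuel + 1) (t + 2) e =
      (let C := (List.range u.length).filter (fun q =>
        decide (u.getD e 0 < u.getD q 0) &&
        (acc.countP (fun sq => decide (q ∈ sq)) + 1 == t + 2));
      match (C.map (fun q => u.getD q 0)).min? with
      | none => []
      | some lmin =>
        match (C.filter (fun q => u.getD q 0 == lmin)).max? with
        | none => []
        | some q => q :: OrthoBij.extendSeqP u acc fuel (t + 2 + 1) q) := rfl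
    set C := (List.range u.length).filter (fun q =>
        decide (u.getD e 0 < u.getD q 0) &&
        (acc.countP (fun sq => decide (q ∈ sq)) + 1 == t + 2)) with hC
    have hmemC : ∀ q, q ∈ C ↔ (q < u.length ∧ y < u.getD q 0 ∧ cnt acc q = t + 1) := by
      intro q
      rw [hC, List.mem_filter]
      constructor
      · rintro ⟨h1, h2⟩
        simp only [Bool.and_eq_true, decide_eq_true_eq, beq_iff_eq] at h2
        refine ⟨List.mem_range.1 h1, hy ▸ h2.1, ?_⟩
        have := h2.2
        simp only [cnt]
        omega
      · rintro ⟨h1, h2, h3⟩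
        refine ⟨List.mem_range.2 h1, ?_⟩
        simp only [Bool.and_eq_true, decide_eq_true_eq, beq_iff_eq]
        refine ⟨hy ▸ h2, ?_⟩
        simp only [cnt] at h3
        omega
    rcases hmin : (C.map (fun q => u.getD q 0)).min? with _ | lmin
    · have hCnil : C = [] := by
        have := List.min?_eq_none_iff.1 hmin
        simpa using this
      have hval : OrthoBij.extendSeqP u acc (fuel + 1) (t + 2) e = [] := by
        rw [hunfold]; simp only [hmin]
      rw [hval]
      refine ExtChain.nil t y ?_
      rw [bump_none_iff]
      intro b hb
      by_contra hyb
      push_neg at hyb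
      have hpos : 0 < (S.getD t []).count b := List.count_pos_iff.2 hb
      rw [hrows t b] at hpos
      obtain ⟨q', hq'r, hq'p⟩ := List.countP_pos_iff.1 hpos
      simp only [decide_eq_true_eq] at hq'p
      have : q' ∈ C := (hmemC q').2 ⟨List.mem_range.1 hq'r, hq'p.2 ▸ hyb, hq'p.1⟩
      rw [hCnil] at this
      simp at this
    · obtain ⟨hminmem, hminle⟩ := nat_min?_spec hmin
      obtain ⟨q0, hq0C, hq0l⟩ := List.mem_map.1 hminmem
      rcases hmax : (C.filter (fun q => u.getD q 0 == lmin)).max? with _ | q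
      · exfalso
        have hmem : q0 ∈ C.filter (fun q => u.getD q 0 == lmin) :=
          List.mem_filter.2 ⟨hq0C, by simp only [beq_iff_eq]; exact hq0l⟩
        rw [List.max?_eq_none_iff.1 hmax] at hmem
        simp at hmem
      · have hqf := nat_max?_mem hmax
        obtain ⟨hqC, hql⟩ := List.mem_filter.1 hqf
        have hql' : u.getD q 0 = lmin := by simp only [beq_iff_eq] at hql; exact hql
        obtain ⟨hqm, hqy, hqcnt⟩ := (hmemC q).1 hqC
        have hrowmem : lmin ∈ S.getD t [] := by
          rw [← List.count_pos_iff, hrows t lmin]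
          refine List.countP_pos_iff.2 ⟨q, List.mem_range.2 hqm, ?_⟩
          simp only [decide_eq_true_eq]
          exact ⟨hqcnt, hql'⟩
        have hrowmin : ∀ b ∈ S.getD t [], y < b → lmin ≤ b := by
          intro b hb hyb
          have hpos : 0 < (S.getD t []).count b := List.count_pos_iff.2 hb
          rw [hrows t b] at hpos
          obtain ⟨q', hq'r, hq'p⟩ := List.countP_pos_iff.1 hpos
          simp only [decide_eq_true_eq] at hq'p
          have hq'C : q' ∈ C := (hmemC q').2 ⟨List.mem_range.1 hq'r, hq'p.2 ▸ hyb, hq'p.1⟩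
          have := hminle _ (List.mem_map.2 ⟨q', hq'C, rfl⟩)
          omega
        obtain ⟨R', hbump⟩ := bump_some_of (hsort_row t) hrowmem (hql' ▸ hqy) hrowmin
        have hval : OrthoBij.extendSeqP u acc (fuel + 1) (t + 2) e
            = q :: OrthoBij.extendSeqP u acc fuel (t + 2 + 1) q := by
          rw [hunfold]; simp only [hmin, hmax]
        rw [hval]
        refine ExtChain.cons t y q _ hqm hqcnt ⟨R', by rw [hql']; exact hbump⟩ ?_
        exact ih (t + 1) (u.getD q 0) q (by omega) rfl

theorem ext_chain_letters (u : List ℕ) (acc S : List (List ℕ)) :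
    ∀ {t y os}, ExtChain u acc S t y os →
      chain (S.drop t) y = y :: os.map (fun q => u.getD q 0) := by
  intro t y os h
  induction h with
  | nil t y hb =>
    cases hd : S.drop t with
    | nil => rfl
    | cons R rest =>
      have hR : S.getD t [] = R := by
        have h1 := List.head?_drop (l := S) (i := t)
        rw [hd] at h1
        simp only [List.head?_cons] at h1
        rw [List.getD_eq_getElem?_getD, ← h1]
        rfl
      rw [hR] at hb
      simp [chain, hb, List.map_nil]
  | cons t y q os hq hcnt hbump hec ihc =>
    obtain ⟨R', hbump⟩ := hbump
    have hne : S.getD t [] ≠ [] := by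
      intro h0; rw [h0] at hbump; simp [bumpRow] at hbump
    have ht : t < S.length := by
      by_contra hcon; push_neg at hcon
      exact hne (List.getD_eq_default _ _ hcon)
    have hd : S.drop t = S.getD t [] :: S.drop (t + 1) := by
      rw [List.getD_eq_getElem _ _ ht]
      exact List.drop_eq_getElem_cons ht
    rw [hd]
    show chain (S.getD t [] :: S.drop (t + 1)) y = _
    rw [chain, hbump]
    show y :: chain (S.drop (t + 1)) (u.getD q 0) = _
    rw [ihc]
    simp


structure Inv (u : List ℕ) (p : ℕ) (acc : List (List ℕ)) (S : List (List ℕ)) : Prop where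
  mem_lb : ∀ s ∈ acc, ∀ q ∈ s, p ≤ q ∧ q < u.length
  hd : ∀ q, p ≤ q → q < u.length → 1 ≤ cnt acc q
  rows : ∀ k a, ((S.getD k []).count a) = lvlg u (cnt acc) k a
  srt : Srt S
  len : S.length + p ≤ u.length

theorem extchain_chainspec {u : List ℕ} {acc S : List (List ℕ)} :
    ∀ {t y os}, ExtChain u acc S t y os → ChainSpec u (cnt acc) (t + 1) os := by
  intro t y os h
  induction h with
  | nil => exact ChainSpec.nil _
  | cons t y q os hq hcnt _ _ ih => exact ChainSpec.cons _ q os hq hcnt ih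

theorem inv_step (u : List ℕ) (p : ℕ) (acc S : List (List ℕ)) (hp : p < u.length)
    (inv : Inv u (p + 1) acc S) :
    Inv u p (acc ++ [p :: OrthoBij.extendSeqP u acc (u.length + 1) 2 p])
      (rinsert S (u.getD p 0)) := by
  obtain ⟨mem_lb, hd, rows, srt, len⟩ := inv
  set x := u.getD p 0 with hx
  set ext := OrthoBij.extendSeqP u acc (u.length + 1) 2 p with hext
  set seq := p :: ext with hseq
  have hcnt0 : cnt acc p = 0 := by
    rw [cnt, List.countP_eq_zero]
    intro sq hsq
    simp only [decide_eq_true_eq]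
    intro hmem
    have := (mem_lb sq hsq p hmem).1
    omega
  have hec : ExtChain u acc S 0 x ext :=
    ext_spec u acc S rows srt (u.length + 1) 0 x p (by omega) rfl
  have hcs : ChainSpec u (cnt acc) 0 seq :=
    ChainSpec.cons 0 p ext hp hcnt0 (extchain_chainspec hec)
  have hmem_ext : ∀ q ∈ ext, p + 1 ≤ q ∧ q < u.length := by
    intro q hq
    have h1 := chainspec_mem (extchain_chainspec hec) q hq
    have h2 : 0 < cnt acc q := by omega
    rw [cnt] at h2
    obtain ⟨sq, hsq, hdec⟩ := List.countP_pos_iff.1 h2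
    simp only [decide_eq_true_eq] at hdec
    exact ⟨(mem_lb sq hsq q hdec).1, h1.1⟩
  have hchainL : chain S x = seq.map (fun q => u.getD q 0) := by
    have h := ext_chain_letters u acc S hec
    rw [List.drop_zero] at h
    rw [h, hseq]
    simp [hx]
  refine ⟨?_, ?_, ?_, ?_, ?_⟩
  · intro s hs q hq
    rcases List.mem_append.1 hs with hs | hs
    · have := mem_lb s hs q hq
      exact ⟨by omega, this.2⟩
    · simp only [List.mem_singleton] at hs
      subst hs
      rcases List.mem_cons.1 hq with rfl | hq
      · exact ⟨le_refl _, hp⟩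
    
      · have := hmem_ext q hq
        exact ⟨by omega, this.2⟩
  · intro q hq1 hq2
    rw [cnt_append]
    rcases Nat.eq_or_lt_of_le hq1 with heq | hlt
    · rw [if_pos (show q ∈ seq by rw [← heq]; simp [hseq])]
      omega
    · have := hd q (by omega) hq2
      omega
  · intro k a
    have model := rinsert_row_count S x k a
    have alg := lvl_update u seq (cnt acc) 0 hcs k a
    rw [ite_cond_and_true (Nat.zero_le _), ite_cond_and_true (Nat.zero_le _)] at alg
    simp only [Nat.sub_zero] at alg
    have hnew : lvlg u (cnt (acc ++ [seq])) k a
        = lvlg u (fun r => cnt acc r + (if r ∈ seq then 1 else 0)) k a := by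
      refine List.countP_congr (fun r hr => ?_)
      simp only [decide_eq_true_eq, cnt_append]
    rw [rows k a, hchainL] at model
    rw [hnew]
    omega
  · exact rinsert_sorted srt x
  · have := rinsert_length S x
    omega

theorem inv_base (u : List ℕ) : Inv u u.length [] [] := by
  refine ⟨?_, ?_, ?_, ?_, ?_⟩
  · intro s hs; simp at hs
  · intro q h1 h2; omega
  · intro k a
    show List.count a ([] : List ℕ) = lvlg u (cnt []) k a
    rw [List.count_nil]
    symm
    rw [lvlg, List.countP_eq_zero]
    intro q hq
    simp only [decide_eq_true_eq, cnt, List.countP_nil]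
    rintro ⟨h, _⟩
  · intro R hR; simp at hR
  · simp

theorem inv_run (u : List ℕ) : ∀ (p : ℕ) (acc S : List (List ℕ)),
    Inv u p acc S → p ≤ u.length →
    Inv u 0 (OrthoBij.seqsAuxP u ((List.range p).reverse) acc)
      (List.foldl rinsert S (((List.range p).reverse).map (fun q => u.getD q 0))) := by
  intro p
  induction p with
  | zero =>
    intro acc S h _
    simpa [OrthoBij.seqsAuxP] using h
  | succ p ih =>
    intro acc S inv hp
    rw [List.range_succ, List.reverse_append]
    simp only [List.reverse_singleton, List.singleton_append, List.map_cons, List.foldl_cons]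
    rw [OrthoBij.seqsAuxP]
    exact ih _ _ (inv_step u p acc S (by omega) inv) (by omega)

theorem inv_seqsP (u : List ℕ) : Inv u 0 (OrthoBij.seqsP u) (Pt u.reverse) := by
  have h := inv_run u u.length [] [] (inv_base u) (le_refl _)
  have e : (((List.range u.length).reverse).map (fun q => u.getD q 0)) = u.reverse := by
    rw [List.map_reverse, map_range_getD]
  rw [e] at h
  exact h

theorem yam_iff_RL (u : List ℕ) : OrthoBij.IsYamanouchi u ↔ RL u.reverse := by
  constructor
  · intro h t ht i
    have hpre : t.reverse <+: u := by
      rw [← List.reverse_suffix]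
      simpa using ht
    have h2 := h t.reverse hpre (i + 1) (by omega)
    simpa [List.count_reverse] using h2
  · intro h s hs i hi
    obtain ⟨j, rfl⟩ : ∃ j, i = j + 1 := ⟨i - 1, by omega⟩
    have hsuf : s.reverse <:+ u.reverse := List.reverse_suffix.2 hs
    have h2 := h s.reverse hsuf j
    simpa [List.count_reverse] using h2

end S15

open S15

open OrthoBij in
/-- A word `u` over the positive integers is Yamanouchi if and only if
every position `p` of `u` carrying the letter `j` belongs to exactly `j` of the
sequences `v_1, …, v_m`. -/
theorem statement15 (u : List ℕ) (hu : ∀ x ∈ u, 0 < x) :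
    IsYamanouchi u ↔
      ∀ p, p < u.length →
        (seqsP u).countP (fun sq => decide (p ∈ sq)) = u.getD p 0 := by
  obtain ⟨mem_lb, hd, rows, srt, len⟩ := inv_seqsP u
  have hurev : ∀ x ∈ u.reverse, 1 ≤ x := fun x hx => hu x (List.mem_reverse.1 hx)
  constructor
  · intro hyam p hp
    have hrl : RL u.reverse := (yam_iff_RL u).1 hyam
    have hrl2 : RL (rowword (Pt u.reverse)) := (Keq_RL (keq_Pt u.reverse)).1 hrl
    have hconst := tableau_const (Pt_sorted u.reverse) (Pt_valid u.reverse hurev) hrl2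
    have h1 : 1 ≤ cnt (seqsP u) p := hd p (Nat.zero_le _) hp
    have h2 : 0 < ((Pt u.reverse).getD (cnt (seqsP u) p - 1) []).count (u.getD p 0) := by
      rw [rows (cnt (seqsP u) p - 1) (u.getD p 0)]
      refine List.countP_pos_iff.2 ⟨p, List.mem_range.2 hp, ?_⟩
      simp only [decide_eq_true_eq]
      exact ⟨by omega, trivial⟩
    have h3 := hconst (cnt (seqsP u) p - 1) _ (List.count_pos_iff.1 h2)
    show cnt (seqsP u) p = u.getD p 0
    omega
  · intro hcnt
    have hconst : ∀ k, ∀ a ∈ (Pt u.reverse).getD k [], a = k + 1 := by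
      intro k a ha
      have h2 : 0 < ((Pt u.reverse).getD k []).count a := List.count_pos_iff.2 ha
      rw [rows k a] at h2
      obtain ⟨q, hqr, hqp⟩ := List.countP_pos_iff.1 h2
      simp only [decide_eq_true_eq] at hqp
      have h3 := hcnt q (List.mem_range.1 hqr)
      rw [show (seqsP u).countP (fun sq => decide (q ∈ sq)) = cnt (seqsP u) q from rfl] at h3
      omega
    have hmono : ∀ k, ((Pt u.reverse).getD (k + 1) []).length
        ≤ ((Pt u.reverse).getD k []).length := by
      intro k
      have hm := Pt_home_mono u.reverse hurev k
      have e1 : ((Pt u.reverse).getD k []).count (k + 1)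
          = ((Pt u.reverse).getD k []).length := by
        rw [List.count_eq_length]
        intro b hb
        exact (hconst k b hb).symm
      have e2 : ((Pt u.reverse).getD (k + 1) []).count (k + 2)
          = ((Pt u.reverse).getD (k + 1) []).length := by
        rw [List.count_eq_length]
        intro b hb
        have := hconst (k + 1) b hb
        omega
      omega
    have hrl2 := RL_superstandard hconst hmono
    have hrl := (Keq_RL (keq_Pt u.reverse)).2 hrl2
    exact (yam_iff_RL u).2 hrl
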